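/- arXiv:2508.18511 — 3 statements merged into one kernel-verified Lean document; each statement's English description precedes it below -/
import Mathlib

section
/- Let N>1 be an integer. If for every integer n with 0 ≤ n ≤ N−1 at least three of the seven integers n, n+1, 2n+1, 3n+1, 3n+2, 4n+1, 4n+3 are coprime to N, then c(N) = 0. -/
namespace Paper

noncomputable section

/-- Closed disk attached to a rational `α = a/b` in lowest terms:
center `α`, radius `1/b`. -/
def disk (α : ℚ) : Set ℂ := Metric.closedBall (α : ℂ) (1 / (α.den : ℝ))

/-- The closed disk `D_{a/b}` of radius `1/b` centered at `a/b`. -/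
def diskAt (a b : ℕ) : Set ℂ := Metric.closedBall ((a : ℂ) / (b : ℂ)) (1 / (b : ℝ))

/-- The north pole `P_α = a/b + i/b` of the disk of `α = a/b` in lowest terms. -/
def northPole (α : ℚ) : ℂ := (α : ℂ) + Complex.I / (α.den : ℂ)

/-- Complexity of the north pole of `α` relative to a set `S` of rationals:
the number of `β ∈ S`, `β ≠ α`, whose disk contains `P_α`. -/
def poleComplexity (S : Set ℚ) (α : ℚ) : ℕ :=
  {β ∈ S | β ≠ α ∧ northPole α ∈ disk β}.ncard

/-- Rationals `a/b ∈ [0,1]` in lowest terms with `N ∣ b`. -/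
def cand (N : ℕ) : Set ℚ := {α | 0 ≤ α ∧ α ≤ 1 ∧ N ∣ α.den}

/-- The region `R_N`. -/
def RN (N : ℕ) : Set ℂ := ⋃ α ∈ cand N, disk α

/-- The set `S_N`: those `α` whose disk is not covered by the other disks. -/
def SSet (N : ℕ) : Set ℚ :=
  {α | α ∈ cand N ∧ ¬ disk α ⊆ ⋃ β ∈ cand N \ {α}, disk β}

/-- The complexity `c(N)`: the maximum of the complexities of north poles of `α ∈ S_N`. -/
def cN (N : ℕ) : ℕ := sSup (poleComplexity (SSet N) '' SSet N)

/-! ### Auxiliary lemmas -/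

lemma num_den_div_nat {x y : ℕ} (hy : 0 < y) (h : Nat.Coprime x y) :
    ((x:ℚ)/(y:ℚ)).num = x ∧ ((x:ℚ)/(y:ℚ)).den = y := by
  have hy' : (0:ℤ) < (y:ℤ) := by exact_mod_cast hy
  have h' : (x:ℤ).natAbs.Coprime (y:ℤ).natAbs := by simpa using h
  have h1 := Rat.num_div_eq_of_coprime hy' h'
  have h2 := Rat.den_div_eq_of_coprime hy' h'
  constructor
  · rw [show ((x:ℚ)/(y:ℚ)) = ((x:ℤ):ℚ)/((y:ℤ):ℚ) by push_cast; ring]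
    rw [h1]
  · have : ((((x:ℤ):ℚ)/((y:ℤ):ℚ)).den : ℤ) = (y:ℤ) := h2
    rw [show ((x:ℚ)/(y:ℚ)) = ((x:ℤ):ℚ)/((y:ℤ):ℚ) by push_cast; ring]
    exact_mod_cast this

lemma num_eq_mul (α : ℚ) : (α.num : ℚ) = α * (α.den : ℚ) := by
  have h : ((α.den:ℚ)) ≠ 0 := by exact_mod_cast α.pos.ne'
  exact (div_eq_iff h).mp (Rat.num_div_den α)

lemma sub_eq (α β : ℚ) :
    α - β = ((α.num * β.den - β.num * α.den : ℤ) : ℚ) / ((α.den : ℚ) * β.den) := by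
  have h1 : ((α.den:ℚ)) ≠ 0 := by exact_mod_cast α.pos.ne'
  have h2 : ((β.den:ℚ)) ≠ 0 := by exact_mod_cast β.pos.ne'
  rw [eq_div_iff (by exact mul_ne_zero h1 h2)]
  push_cast
  rw [num_eq_mul α, num_eq_mul β]
  ring

lemma dist_ratCast (p q : ℚ) : dist (p:ℂ) (q:ℂ) = |((p:ℝ)) - (q:ℝ)| := by
  rw [Complex.dist_eq_re_im]
  simp only [Complex.ratCast_re, Complex.ratCast_im]
  rw [show ((p:ℝ) - q)^2 + (0 - (0:ℝ))^2 = ((p:ℝ) - q)^2 by ring]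
  exact Real.sqrt_sq_eq_abs _

lemma disk_subset' {α β : ℚ}
    (h : |α.num * (β.den:ℤ) - β.num * (α.den:ℤ)| ≤ (α.den : ℤ) - (β.den : ℤ)) :
    disk α ⊆ disk β := by
  have h1 : (0:ℚ) < α.den := by exact_mod_cast α.pos
  have h2 : (0:ℚ) < β.den := by exact_mod_cast β.pos
  apply Metric.closedBall_subset_closedBall'
  rw [dist_ratCast]
  have hq : 1/(α.den:ℚ) + |α - β| ≤ 1/(β.den:ℚ) := by
    have h3 : |(α.num:ℚ) * (β.den:ℚ) - (β.num:ℚ) * (α.den:ℚ)| ≤ (α.den:ℚ) - (β.den:ℚ) := by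
      exact_mod_cast h
    have e1 : |α - β| = |(α.num:ℚ) * (β.den:ℚ) - (β.num:ℚ) * (α.den:ℚ)| / ((α.den:ℚ) * β.den) := by
      rw [sub_eq α β, abs_div, abs_of_pos (mul_pos h1 h2)]
      push_cast
      ring
    rw [e1, div_add_div _ _ h1.ne' (by positivity), div_le_div_iff₀ (by positivity) h2]
    nlinarith [mul_pos h1 h2, abs_nonneg ((α.num:ℚ) * (β.den:ℚ) - (β.num:ℚ) * (α.den:ℚ)),
      mul_le_mul_of_nonneg_left h3 (le_of_lt (mul_pos h1 h2))]
  have h5 : ((1/(α.den:ℚ) + |α - β| : ℚ) : ℝ) ≤ ((1/(β.den:ℚ) : ℚ) : ℝ) := by exact_mod_cast hq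
  push_cast at h5
  exact h5

lemma pole_cond {α β : ℚ} (h : northPole α ∈ disk β) :
    (α.num * (β.den:ℤ) - β.num * (α.den:ℤ))^2 + (β.den:ℤ)^2 ≤ (α.den:ℤ)^2 := by
  have h1 : (0:ℝ) < α.den := by exact_mod_cast α.pos
  have h2 : (0:ℝ) < β.den := by exact_mod_cast β.pos
  rw [disk, Metric.mem_closedBall, Complex.dist_eq_re_im] at h
  have hre : (northPole α).re = (α:ℝ) := by
    simp [northPole, Complex.div_re]
  have him : (northPole α).im = 1/(α.den:ℝ) := by
    simp [northPole, Complex.div_im, Complex.normSq_apply]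
  rw [hre, him] at h
  simp only [Complex.ratCast_re, Complex.ratCast_im] at h
  have hX : (0:ℝ) ≤ ((α:ℝ) - β)^2 + (1/(α.den:ℝ) - 0)^2 := by positivity
  have h3 : ((α:ℝ) - β)^2 + (1/(α.den:ℝ))^2 ≤ (1/(β.den:ℝ))^2 := by
    nlinarith [Real.sq_sqrt hX, Real.sqrt_nonneg (((α:ℝ) - β)^2 + (1/(α.den:ℝ) - 0)^2), h]
  have h4 : ((α - β : ℚ))^2 + (1/(α.den:ℚ))^2 ≤ (1/(β.den:ℚ))^2 := by
    have h4' : (((α - β)^2 + (1/(α.den:ℚ))^2 : ℚ) : ℝ) ≤ (((1/(β.den:ℚ))^2 : ℚ) : ℝ) := by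
      push_cast
      exact h3
    exact_mod_cast h4'
  rw [sub_eq α β] at h4
  have hd1 : (0:ℚ) < α.den := by exact_mod_cast α.pos
  have hd2 : (0:ℚ) < β.den := by exact_mod_cast β.pos
  have h6 : ((α.num * (β.den:ℤ) - β.num * (α.den:ℤ) : ℤ):ℚ)^2 + (β.den:ℚ)^2 ≤ (α.den:ℚ)^2 := by
    have h7 := mul_le_mul_of_nonneg_right h4 (le_of_lt (pow_pos (mul_pos hd1 hd2) 2))
    have e1 : (((α.num * (β.den:ℤ) - β.num * (α.den:ℤ) : ℤ):ℚ) / ((α.den:ℚ) * β.den))^2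
        * ((α.den:ℚ) * β.den)^2 = ((α.num * (β.den:ℤ) - β.num * (α.den:ℤ) : ℤ):ℚ)^2 := by
      field_simp
    have e2 : (1/(β.den:ℚ))^2 * ((α.den:ℚ) * β.den)^2 = (α.den:ℚ)^2 := by
      field_simp
    have e3 : (1/(α.den:ℚ))^2 * ((α.den:ℚ) * β.den)^2 = (β.den:ℚ)^2 := by field_simp
    nlinarith [h7, e1, e2, e3]
  exact_mod_cast h6

lemma ball_union {a b c r r1 r2 : ℝ} (hr1 : 0 ≤ r1) (hr2 : 0 ≤ r2)
    (h1 : b ≤ a) (h2 : a ≤ c)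
    (e1 : (a - b)^2 + r^2 ≤ r1^2) (e2 : (c - a)^2 + r^2 ≤ r2^2) :
    Metric.closedBall ((a:ℂ)) r ⊆ Metric.closedBall ((b:ℂ)) r1 ∪ Metric.closedBall ((c:ℂ)) r2 := by
  intro z hz
  rw [Metric.mem_closedBall, Complex.dist_eq_re_im] at hz
  simp only [Complex.ofReal_re, Complex.ofReal_im] at hz
  have hX : (0:ℝ) ≤ (z.re - a)^2 + (z.im - 0)^2 := by positivity
  have hz2 : (z.re - a)^2 + z.im^2 ≤ r^2 := by
    nlinarith [Real.sq_sqrt hX, Real.sqrt_nonneg ((z.re - a)^2 + (z.im - 0)^2), hz]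
  rcases le_total z.re a with hside | hside
  · left
    rw [Metric.mem_closedBall, Complex.dist_eq_re_im]
    simp only [Complex.ofReal_re, Complex.ofReal_im]
    have key : (z.re - b)^2 + (z.im - 0)^2 ≤ r1^2 := by
      nlinarith [hz2, e1, mul_nonneg (sub_nonneg.2 hside) (sub_nonneg.2 h1)]
    calc Real.sqrt ((z.re - b)^2 + (z.im - 0)^2) ≤ Real.sqrt (r1^2) := Real.sqrt_le_sqrt key
      _ = r1 := Real.sqrt_sq hr1
  · right
    rw [Metric.mem_closedBall, Complex.dist_eq_re_im]
    simp only [Complex.ofReal_re, Complex.ofReal_im]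
    have key : (z.re - c)^2 + (z.im - 0)^2 ≤ r2^2 := by
      nlinarith [hz2, e2, mul_nonneg (sub_nonneg.2 hside) (sub_nonneg.2 h2)]
    calc Real.sqrt ((z.re - c)^2 + (z.im - 0)^2) ≤ Real.sqrt (r2^2) := Real.sqrt_le_sqrt key
      _ = r2 := Real.sqrt_sq hr2

lemma mem_cand_div {N x d : ℕ} (hN : 0 < N) (hd : 0 < d)
    (hcop : Nat.Coprime x (d*N)) (hle : x ≤ d*N) :
    ((x:ℚ)/((d*N : ℕ):ℚ)) ∈ cand N := by
  have hdN : 0 < d*N := Nat.mul_pos hd hN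
  obtain ⟨hnum, hden⟩ := num_den_div_nat hdN hcop
  refine ⟨by positivity, ?_, ?_⟩
  · rw [div_le_one (by exact_mod_cast hdN)]
    exact_mod_cast hle
  · rw [hden]
    exact dvd_mul_left N d

lemma abs_bound {N A B : ℤ} (hN : 0 ≤ N) (h : |A| ≤ B) : |N * A| ≤ N * B := by
  rw [abs_mul, abs_of_nonneg hN]
  exact mul_le_mul_of_nonneg_left h hN

lemma single_cover {N : ℕ} (hN : 1 < N) {α : ℚ}
    {x d : ℕ} (hd : 0 < d) (hcop : Nat.Coprime x (d*N)) (hxle : x ≤ d*N)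
    (hdlt : d * N ≠ α.den)
    (habs : |α.num * ((d*N:ℕ):ℤ) - (x:ℤ) * α.den| ≤ (α.den:ℤ) - ((d*N:ℕ):ℤ)) :
    disk α ⊆ ⋃ β ∈ cand N \ {α}, disk β := by
  have hdN : 0 < d*N := Nat.mul_pos hd (by omega)
  obtain ⟨hnum, hden⟩ := num_den_div_nat hdN hcop
  have hmem : ((x:ℚ)/((d*N : ℕ):ℚ)) ∈ cand N := mem_cand_div (by omega) hd hcop hxle
  have hne : ((x:ℚ)/((d*N : ℕ):ℚ)) ≠ α := by
    intro hh
    rw [hh] at hden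
    exact hdlt hden.symm
  refine (disk_subset' (β := (x:ℚ)/((d*N : ℕ):ℚ)) ?_).trans (Set.subset_biUnion_of_mem ?_)
  · rw [hnum, hden]
    exact_mod_cast habs
  · exact ⟨hmem, hne⟩

lemma double_cover {N : ℕ} (hN : 1 < N) {α : ℚ}
    {x1 d1 x2 d2 : ℕ} (hd1 : 0 < d1) (hd2 : 0 < d2)
    (hc1 : Nat.Coprime x1 (d1*N)) (hc2 : Nat.Coprime x2 (d2*N))
    (hx1 : x1 ≤ d1*N) (hx2 : x2 ≤ d2*N)
    (hne1 : d1 * N ≠ α.den) (hne2 : d2 * N ≠ α.den)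
    (hord1 : ((x1:ℚ)/((d1*N:ℕ):ℚ)) ≤ α) (hord2 : α ≤ (x2:ℚ)/((d2*N:ℕ):ℚ))
    (e1 : (α - (x1:ℚ)/((d1*N:ℕ):ℚ))^2 + (1/(α.den:ℚ))^2 ≤ (1/((d1*N:ℕ):ℚ))^2)
    (e2 : ((x2:ℚ)/((d2*N:ℕ):ℚ) - α)^2 + (1/(α.den:ℚ))^2 ≤ (1/((d2*N:ℕ):ℚ))^2) :
    disk α ⊆ ⋃ β ∈ cand N \ {α}, disk β := by
  have hd1N : 0 < d1*N := Nat.mul_pos hd1 (by omega)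
  have hd2N : 0 < d2*N := Nat.mul_pos hd2 (by omega)
  obtain ⟨hnum1, hden1⟩ := num_den_div_nat hd1N hc1
  obtain ⟨hnum2, hden2⟩ := num_den_div_nat hd2N hc2
  have hmem1 : ((x1:ℚ)/((d1*N:ℕ):ℚ)) ∈ cand N := mem_cand_div (by omega) hd1 hc1 hx1
  have hmem2 : ((x2:ℚ)/((d2*N:ℕ):ℚ)) ∈ cand N := mem_cand_div (by omega) hd2 hc2 hx2
  have hne1' : ((x1:ℚ)/((d1*N:ℕ):ℚ)) ≠ α := by
    intro hh; rw [hh] at hden1; exact hne1 hden1.symm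
  have hne2' : ((x2:ℚ)/((d2*N:ℕ):ℚ)) ≠ α := by
    intro hh; rw [hh] at hden2; exact hne2 hden2.symm
  have hsub : disk α ⊆ disk ((x1:ℚ)/((d1*N:ℕ):ℚ)) ∪ disk ((x2:ℚ)/((d2*N:ℕ):ℚ)) := by
    rw [disk, disk, disk, hden1, hden2,
      show (((x1:ℚ)/((d1*N:ℕ):ℚ) : ℚ) : ℂ) = ((((x1:ℚ)/((d1*N:ℕ):ℚ) : ℚ):ℝ):ℂ) by push_cast; ring,
      show (((x2:ℚ)/((d2*N:ℕ):ℚ) : ℚ) : ℂ) = ((((x2:ℚ)/((d2*N:ℕ):ℚ) : ℚ):ℝ):ℂ) by push_cast; ring,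
      show ((α : ℚ) : ℂ) = (((α:ℝ)):ℂ) by push_cast; ring]
    apply ball_union (by positivity) (by positivity)
    · exact_mod_cast hord1
    · exact_mod_cast hord2
    · have h' : (((α - (x1:ℚ)/((d1*N:ℕ):ℚ))^2 + (1/(α.den:ℚ))^2 : ℚ) : ℝ)
          ≤ (((1/((d1*N:ℕ):ℚ))^2 : ℚ) : ℝ) := by exact_mod_cast e1
      push_cast at h' ⊢
      ring_nf at h' ⊢
      exact h'
    · have h' : ((((x2:ℚ)/((d2*N:ℕ):ℚ) - α)^2 + (1/(α.den:ℚ))^2 : ℚ) : ℝ)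
          ≤ (((1/((d2*N:ℕ):ℚ))^2 : ℚ) : ℝ) := by exact_mod_cast e2
      push_cast at h' ⊢
      ring_nf at h' ⊢
      exact h'
  refine hsub.trans (Set.union_subset ?_ ?_)
  · exact Set.subset_biUnion_of_mem ⟨hmem1, hne1'⟩
  · exact Set.subset_biUnion_of_mem ⟨hmem2, hne2'⟩

lemma three_of_seven {N n : ℕ}
    (h : 3 ≤ (([n, n + 1, 2 * n + 1, 3 * n + 1, 3 * n + 2, 4 * n + 1, 4 * n + 3].filter
        (fun m => Nat.gcd N m = 1)).length)) :
    Nat.gcd N n = 1 ∨ Nat.gcd N (n+1) = 1 ∨ Nat.gcd N (2*n+1) = 1 ∨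
    (Nat.gcd N (3*n+1) = 1 ∧ Nat.gcd N (3*n+2) = 1) ∨
    (Nat.gcd N (3*n+1) = 1 ∧ Nat.gcd N (4*n+1) = 1 ∧ Nat.gcd N (4*n+3) = 1) ∨
    (Nat.gcd N (3*n+2) = 1 ∧ Nat.gcd N (4*n+1) = 1 ∧ Nat.gcd N (4*n+3) = 1) := by
  by_cases h1 : Nat.gcd N n = 1
  · exact Or.inl h1
  by_cases h2 : Nat.gcd N (n+1) = 1
  · exact Or.inr (Or.inl h2)
  by_cases h3 : Nat.gcd N (2*n+1) = 1
  · exact Or.inr (Or.inr (Or.inl h3))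
  by_cases h4 : Nat.gcd N (3*n+1) = 1 <;>
  by_cases h5 : Nat.gcd N (3*n+2) = 1 <;>
  by_cases h6 : Nat.gcd N (4*n+1) = 1 <;>
  by_cases h7 : Nat.gcd N (4*n+3) = 1 <;>
    simp [List.filter, h1, h2, h3, h4, h5, h6, h7] at h <;> tauto

lemma num_odd_of_even_den {γ : ℚ} (h2 : 2 ∣ γ.den) : γ.num % 2 = 1 ∨ γ.num % 2 = -1 := by
  have hred := γ.reduced
  rcases Int.emod_two_eq_zero_or_one γ.num with he | he
  · exfalso
    have h2' : (2:ℤ) ∣ γ.num := Int.dvd_of_emod_eq_zero he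
    have h2n : 2 ∣ γ.num.natAbs := by
      have := Int.natAbs_dvd_natAbs.mpr h2'
      simpa using this
    have := Nat.dvd_gcd h2n h2
    rw [Nat.Coprime] at hred
    omega
  · left; exact he

lemma no_pole_pair {N : ℕ} (hN : 1 < N) {α β : ℚ} (hα : α ∈ SSet N) (hβ : β ∈ SSet N)
    {p q : ℕ} (hp1 : 1 ≤ p) (hp4 : p ≤ 4) (hpden : α.den = p * N)
    (hq1 : 1 ≤ q) (hq4 : q ≤ 4) (hqden : β.den = q * N)
    (hne : β ≠ α) (hpole : northPole α ∈ disk β) : False := by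
  have hNZ : (0:ℤ) < (N:ℤ) := by exact_mod_cast Nat.lt_of_lt_of_le Nat.zero_lt_one hN.le
  have hint := pole_cond hpole
  have hnc : ¬ (|α.num * (β.den:ℤ) - β.num * (α.den:ℤ)| ≤ (α.den:ℤ) - (β.den:ℤ)) := by
    intro hh
    exact hα.2 ((disk_subset' hh).trans (Set.subset_biUnion_of_mem ⟨hβ.1, hne⟩))
  push_neg at hnc
  set e : ℤ := α.num * q - β.num * p with he
  have hE : α.num * (β.den:ℤ) - β.num * (α.den:ℤ) = e * N := by
    rw [hpden, hqden]; push_cast; ring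
  rw [hE] at hint hnc
  rw [hpden, hqden] at hint hnc
  rw [abs_mul, Int.abs_natCast] at hnc
  push_cast at hint hnc
  have hsq : e^2 + (q:ℤ)^2 ≤ (p:ℤ)^2 := by
    have hN2 : (0:ℤ) < (N:ℤ)^2 := by positivity
    nlinarith [hint, hN2]
  have hgt' : (p:ℤ) - (q:ℤ) < |e| := by
    have hmul : ((p:ℤ) - q) * N < |e| * N := by linarith [hnc]
    exact lt_of_mul_lt_mul_right hmul hNZ.le
  have hparα : 2 ∣ p → α.num % 2 = 1 ∨ α.num % 2 = -1 := fun hh =>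
    num_odd_of_even_den (by rw [hpden]; exact Dvd.dvd.mul_right hh N)
  have hparβ : 2 ∣ q → β.num % 2 = 1 ∨ β.num % 2 = -1 := fun hh =>
    num_odd_of_even_den (by rw [hqden]; exact Dvd.dvd.mul_right hh N)
  set k : ℕ := e.natAbs with hk
  have habs : |e| = (k:ℤ) := Int.abs_eq_natAbs e
  have hsqn : k^2 + q^2 ≤ p^2 := by
    have h' : ((k:ℤ))^2 + (q:ℤ)^2 ≤ (p:ℤ)^2 := by rw [← habs, sq_abs]; exact hsq
    exact_mod_cast h'
  have hgtn : p < q + k := by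
    rw [habs] at hgt'
    have : (p:ℤ) < (q:ℤ) + k := by linarith
    exact_mod_cast this
  have hk4 : k ≤ 4 := by nlinarith [hsqn, hp4]
  have hee := Int.natAbs_eq e
  rw [← hk] at hee
  clear hint hnc hE hpden hqden hpole habs hgt' hsq
  interval_cases p <;> interval_cases q <;> interval_cases k <;>
  · first
    | (norm_num at hsqn; done)
    | omega
    | (have hpb := hparβ (by norm_num)
       rcases hee with hae | hae <;> rcases hpb with hh | hh <;> omega)
    | (have hpa := hparα (by norm_num)
       rcases hee with hae | hae <;> rcases hpa with hh | hh <;> omega)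
    | (rcases hee with hae | hae <;> omega)

lemma sq_div_ineq {x y P Q : ℚ} (hP : 0 < P) (hQ : 0 < Q)
    (key : (x*Q - y*P)^2 + Q^2 ≤ P^2) :
    (x/P - y/Q)^2 + (1/P)^2 ≤ (1/Q)^2 := by
  have c1 : (x/P - y/Q)^2 + (1/P)^2 = ((x*Q - y*P)^2 + Q^2) * (1/(P*Q))^2 := by
    field_simp
  have c3 : P^2 * (1/(P*Q))^2 = (1/Q)^2 := by
    field_simp
  rw [c1, ← c3]
  apply mul_le_mul_of_nonneg_right key
  positivity

lemma sq_div_ineq' {x y P Q : ℚ} (hP : 0 < P) (hQ : 0 < Q)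
    (key : (x*Q - y*P)^2 + Q^2 ≤ P^2) :
    (y/Q - x/P)^2 + (1/P)^2 ≤ (1/Q)^2 := by
  rw [(show (y/Q - x/P)^2 = (x/P - y/Q)^2 by ring)]
  exact sq_div_ineq hP hQ key


set_option maxHeartbeats 1000000 in
lemma den_classify {N : ℕ} (hN : 1 < N)
    (h : ∀ n, n ≤ N - 1 →
      3 ≤ (([n, n + 1, 2 * n + 1, 3 * n + 1, 3 * n + 2, 4 * n + 1, 4 * n + 3].filter
        (fun m => Nat.gcd N m = 1)).length))
    {α : ℚ} (hα : α ∈ SSet N) : ∃ p, 1 ≤ p ∧ p ≤ 4 ∧ α.den = p * N := by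
  obtain ⟨⟨h0, h1, hdvd⟩, hncov⟩ := hα
  obtain ⟨m, hm⟩ := hdvd
  have hm0 : 0 < m := by
    rcases Nat.eq_zero_or_pos m with rfl | h'
    · exfalso; have h2 := α.pos; rw [hm] at h2; simp at h2
    · exact h'
  by_cases hm4 : m ≤ 4
  · exact ⟨m, hm0, hm4, by rw [hm, Nat.mul_comm]⟩
  push_neg at hm4
  exfalso
  -- basic data
  set a := α.num.toNat with ha
  have hnum : α.num = (a:ℤ) := (Int.toNat_of_nonneg (Rat.num_nonneg.mpr h0)).symm
  have hred : Nat.Coprime a α.den := by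
    have h' := α.reduced
    rwa [hnum, Int.natAbs_natCast] at h'
  have hcopm : Nat.Coprime a m := Nat.Coprime.coprime_dvd_right ⟨N, by rw [hm, Nat.mul_comm]⟩ hred
  have hcopN : Nat.Coprime a N := Nat.Coprime.coprime_dvd_right ⟨m, hm⟩ hred
  obtain ⟨n, j, haj, hj1, hjm⟩ : ∃ n j, m*n + j = a ∧ 1 ≤ j ∧ j < m := by
    refine ⟨a / m, a % m, Nat.div_add_mod a m, ?_, Nat.mod_lt _ (by omega)⟩
    rcases Nat.eq_zero_or_pos (a % m) with h' | h'
    · exfalso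
      have hdvd' : m ∣ a := Nat.dvd_of_mod_eq_zero h'
      have h2 := Nat.dvd_gcd hdvd' (dvd_refl m)
      rw [hcopm] at h2
      have := Nat.le_of_dvd one_pos h2
      omega
    · exact h'
  have hcopjm : Nat.Coprime j m := by
    have h2 : Nat.gcd m a = Nat.gcd (a % m) m := Nat.gcd_rec m a
    have h3 : a % m = j := by rw [← haj, Nat.mul_add_mod, Nat.mod_eq_of_lt hjm]
    have h4 : Nat.gcd m a = 1 := hcopm.symm
    rw [h2, h3] at h4
    exact h4
  have haN : a ≤ N * m := by
    have h' : (α.num : ℚ) ≤ (α.den : ℚ) := by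
      have := num_eq_mul α
      nlinarith [this, (show (0:ℚ) < α.den by exact_mod_cast α.pos), h1]
    have h'' : α.num ≤ (α.den : ℤ) := by exact_mod_cast h'
    rw [hnum, hm] at h''
    exact_mod_cast h''
  have hnN : n < N := by
    by_contra h'
    push_neg at h'
    have h2 : m * N ≤ m * n := Nat.mul_le_mul_left m h'
    have h3 : m * N = N * m := Nat.mul_comm m N
    omega
  have hnn : n ≤ N - 1 := by omega
  -- denominator difference
  have hdne : ∀ d : ℕ, d < m → d * N ≠ α.den := by
    intro d hd hh
    rw [hm] at hh
    have h2 : N * d = N * m := by rw [Nat.mul_comm]; exact hh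
    have := Nat.eq_of_mul_eq_mul_left (show 0 < N by omega) h2
    omega
  -- coprimality helpers
  have hc2 : Nat.Coprime (2*n+1) 2 := by
    have : Nat.gcd 2 (2*n+1) = 1 := by
      rw [Nat.gcd_rec, (show (2*n+1) % 2 = 1 by omega)]
      decide
    exact Nat.coprime_comm.mp this
  have hc31 : Nat.Coprime (3*n+1) 3 := by
    have : Nat.gcd 3 (3*n+1) = 1 := by
      rw [Nat.gcd_rec, (show (3*n+1) % 3 = 1 by omega)]
      decide
    exact Nat.coprime_comm.mp this
  have hc32 : Nat.Coprime (3*n+2) 3 := by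
    have : Nat.gcd 3 (3*n+2) = 1 := by
      rw [Nat.gcd_rec, (show (3*n+2) % 3 = 2 by omega)]
      decide
    exact Nat.coprime_comm.mp this
  have hc41 : Nat.Coprime (4*n+1) 4 := by
    have : Nat.gcd 4 (4*n+1) = 1 := by
      rw [Nat.gcd_rec, (show (4*n+1) % 4 = 1 by omega)]
      decide
    exact Nat.coprime_comm.mp this
  have hc43 : Nat.Coprime (4*n+3) 4 := by
    have : Nat.gcd 4 (4*n+3) = 1 := by
      rw [Nat.gcd_rec, (show (4*n+3) % 4 = 3 by omega)]
      decide
    exact Nat.coprime_comm.mp this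
  rcases three_of_seven (h n hnn) with hc|hc|hc|⟨hca,hcb⟩|⟨hca,hcb,hcc⟩|⟨hca,hcb,hcc⟩
  · -- x = n, d = 1
    apply hncov
    apply single_cover hN (x := n) (d := 1) (by norm_num)
      (by rw [one_mul]; exact Nat.coprime_comm.mp hc) (by omega) (hdne 1 (by omega))
    have hE : α.num * ((1*N:ℕ):ℤ) - (n:ℤ) * α.den = (N:ℤ) * ((j:ℤ)) := by
      rw [hnum, hm, ← haj]; push_cast; ring
    rw [hE, (show (α.den:ℤ) - ((1*N:ℕ):ℤ) = (N:ℤ) * ((m:ℤ) - 1) by rw [hm]; push_cast; ring)]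
    apply abs_bound (by positivity)
    rw [abs_le]
    constructor <;> [omega; omega]
  · -- x = n+1, d = 1
    apply hncov
    apply single_cover hN (x := n+1) (d := 1) (by norm_num)
      (by rw [one_mul]; exact Nat.coprime_comm.mp hc) (by omega) (hdne 1 (by omega))
    have hE : α.num * ((1*N:ℕ):ℤ) - ((n+1:ℕ):ℤ) * α.den = (N:ℤ) * ((j:ℤ) - m) := by
      rw [hnum, hm, ← haj]; push_cast; ring
    rw [hE, (show (α.den:ℤ) - ((1*N:ℕ):ℤ) = (N:ℤ) * ((m:ℤ) - 1) by rw [hm]; push_cast; ring)]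
    apply abs_bound (by positivity)
    rw [abs_le]
    constructor <;> [omega; omega]
  · -- x = 2n+1, d = 2
    apply hncov
    apply single_cover hN (x := 2*n+1) (d := 2) (by norm_num)
      (Nat.Coprime.mul_right hc2 (Nat.coprime_comm.mp hc)) (by omega) (hdne 2 (by omega))
    have hE : α.num * ((2*N:ℕ):ℤ) - ((2*n+1:ℕ):ℤ) * α.den = (N:ℤ) * (2*(j:ℤ) - m) := by
      rw [hnum, hm, ← haj]; push_cast; ring
    rw [hE, (show (α.den:ℤ) - ((2*N:ℕ):ℤ) = (N:ℤ) * ((m:ℤ) - 2) by rw [hm]; push_cast; ring)]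
    apply abs_bound (by positivity)
    rw [abs_le]
    constructor <;> [omega; omega]
  · -- both 3n+1, 3n+2 coprime
    by_cases hsp : 3*j + 3 ≤ 2*m
    · apply hncov
      apply single_cover hN (x := 3*n+1) (d := 3) (by norm_num)
        (Nat.Coprime.mul_right hc31 (Nat.coprime_comm.mp hca)) (by omega) (hdne 3 (by omega))
      have hE : α.num * ((3*N:ℕ):ℤ) - ((3*n+1:ℕ):ℤ) * α.den = (N:ℤ) * (3*(j:ℤ) - m) := by
        rw [hnum, hm, ← haj]; push_cast; ring
      rw [hE, (show (α.den:ℤ) - ((3*N:ℕ):ℤ) = (N:ℤ) * ((m:ℤ) - 3) by rw [hm]; push_cast; ring)]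
      apply abs_bound (by positivity)
      rw [abs_le]
      constructor <;> [omega; omega]
    · apply hncov
      apply single_cover hN (x := 3*n+2) (d := 3) (by norm_num)
        (Nat.Coprime.mul_right hc32 (Nat.coprime_comm.mp hcb)) (by omega) (hdne 3 (by omega))
      have hE : α.num * ((3*N:ℕ):ℤ) - ((3*n+2:ℕ):ℤ) * α.den = (N:ℤ) * (3*(j:ℤ) - 2*m) := by
        rw [hnum, hm, ← haj]; push_cast; ring
      rw [hE, (show (α.den:ℤ) - ((3*N:ℕ):ℤ) = (N:ℤ) * ((m:ℤ) - 3) by rw [hm]; push_cast; ring)]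
      apply abs_bound (by positivity)
      rw [abs_le]
      constructor <;> [omega; omega]
  · -- 3n+1, 4n+1, 4n+3 coprime
    by_cases hsp : 3*j + 3 ≤ 2*m
    · apply hncov
      apply single_cover hN (x := 3*n+1) (d := 3) (by norm_num)
        (Nat.Coprime.mul_right hc31 (Nat.coprime_comm.mp hca)) (by omega) (hdne 3 (by omega))
      have hE : α.num * ((3*N:ℕ):ℤ) - ((3*n+1:ℕ):ℤ) * α.den = (N:ℤ) * (3*(j:ℤ) - m) := by
        rw [hnum, hm, ← haj]; push_cast; ring
      rw [hE, (show (α.den:ℤ) - ((3*N:ℕ):ℤ) = (N:ℤ) * ((m:ℤ) - 3) by rw [hm]; push_cast; ring)]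
      apply abs_bound (by positivity)
      rw [abs_le]
      constructor <;> [omega; omega]
    by_cases hsp2 : 2*j + 2 ≤ m
    · apply hncov
      apply single_cover hN (x := 4*n+1) (d := 4) (by norm_num)
        (Nat.Coprime.mul_right hc41 (Nat.coprime_comm.mp hcb)) (by omega) (hdne 4 (by omega))
      have hE : α.num * ((4*N:ℕ):ℤ) - ((4*n+1:ℕ):ℤ) * α.den = (N:ℤ) * (4*(j:ℤ) - m) := by
        rw [hnum, hm, ← haj]; push_cast; ring
      rw [hE, (show (α.den:ℤ) - ((4*N:ℕ):ℤ) = (N:ℤ) * ((m:ℤ) - 4) by rw [hm]; push_cast; ring)]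
      apply abs_bound (by positivity)
      rw [abs_le]
      constructor <;> [omega; omega]
    by_cases hsp3 : 2*m + 4 ≤ 4*j
    · apply hncov
      apply single_cover hN (x := 4*n+3) (d := 4) (by norm_num)
        (Nat.Coprime.mul_right hc43 (Nat.coprime_comm.mp hcc)) (by omega) (hdne 4 (by omega))
      have hE : α.num * ((4*N:ℕ):ℤ) - ((4*n+3:ℕ):ℤ) * α.den = (N:ℤ) * (4*(j:ℤ) - 3*m) := by
        rw [hnum, hm, ← haj]; push_cast; ring
      rw [hE, (show (α.den:ℤ) - ((4*N:ℕ):ℤ) = (N:ℤ) * ((m:ℤ) - 4) by rw [hm]; push_cast; ring)]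
      apply abs_bound (by positivity)
      rw [abs_le]
      constructor <;> [omega; omega]
    · -- exceptional cases (m,j) = (5,3) or (7,4)
      have h2jm : ¬ (2*j = m) := by
        intro hh
        have hdj : j ∣ m := ⟨2, by omega⟩
        have h2 := Nat.dvd_gcd (dvd_refl j) hdj
        rw [hcopjm] at h2
        have := Nat.le_of_dvd one_pos h2
        omega
      have hmj : (m = 5 ∧ j = 3) ∨ (m = 7 ∧ j = 4) := by omega
      have hαq : α = ((a:ℕ):ℚ)/((N*m:ℕ):ℚ) := by
        rw [← hm]
        conv_lhs => rw [← Rat.num_div_den α]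
        rw [hnum]
        push_cast
        ring
      have hN0 : (0:ℚ) < (N:ℚ) := by exact_mod_cast (by omega : 0 < N)
      rcases hmj with ⟨hm5, hj3⟩ | ⟨hm7, hj4⟩ <;>
        [(rw [hm5] at hm hαq; rw [hm5, hj3] at haj);
         (rw [hm7] at hm hαq; rw [hm7, hj4] at haj)]
      · -- m=5,j=3
        apply hncov
        apply double_cover hN (x1 := 3*n+1) (d1 := 3) (x2 := 4*n+3) (d2 := 4)
          (by norm_num) (by norm_num)
          (Nat.Coprime.mul_right hc31 (Nat.coprime_comm.mp hca))
          (Nat.Coprime.mul_right hc43 (Nat.coprime_comm.mp hcc))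
          (by omega) (by omega) (hdne 3 (by omega)) (hdne 4 (by omega))
        · rw [hαq, (show a = 5*n+3 by omega), div_le_div_iff₀ (by positivity) (by positivity)]
          push_cast
          ring_nf
          linarith [hN0]
        · rw [hαq, (show a = 5*n+3 by omega), div_le_div_iff₀ (by positivity) (by positivity)]
          push_cast
          ring_nf
          linarith [hN0]
        · rw [hm, hαq]
          apply sq_div_ineq (by positivity) (by positivity)
          rw [(show a = 5*n+3 by omega)]
          push_cast
          ring_nf
          nlinarith [hN0, sq_nonneg ((N:ℚ))]
        · rw [hm, hαq]
          apply sq_div_ineq' (by positivity) (by positivity)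
          rw [(show a = 5*n+3 by omega)]
          push_cast
          ring_nf
          nlinarith [hN0, sq_nonneg ((N:ℚ))]
      · -- m=7,j=4
        apply hncov
        apply double_cover hN (x1 := 3*n+1) (d1 := 3) (x2 := 4*n+3) (d2 := 4)
          (by norm_num) (by norm_num)
          (Nat.Coprime.mul_right hc31 (Nat.coprime_comm.mp hca))
          (Nat.Coprime.mul_right hc43 (Nat.coprime_comm.mp hcc))
          (by omega) (by omega) (hdne 3 (by omega)) (hdne 4 (by omega))
        · rw [hαq, (show a = 7*n+4 by omega), div_le_div_iff₀ (by positivity) (by positivity)]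
          push_cast
          ring_nf
          linarith [hN0]
        · rw [hαq, (show a = 7*n+4 by omega), div_le_div_iff₀ (by positivity) (by positivity)]
          push_cast
          ring_nf
          linarith [hN0]
        · rw [hm, hαq]
          apply sq_div_ineq (by positivity) (by positivity)
          rw [(show a = 7*n+4 by omega)]
          push_cast
          ring_nf
          nlinarith [hN0, sq_nonneg ((N:ℚ))]
        · rw [hm, hαq]
          apply sq_div_ineq' (by positivity) (by positivity)
          rw [(show a = 7*n+4 by omega)]
          push_cast
          ring_nf
          nlinarith [hN0, sq_nonneg ((N:ℚ))]
  · -- 3n+2, 4n+1, 4n+3 coprime (mirror case)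
    by_cases hsp : m + 3 ≤ 3*j
    · apply hncov
      apply single_cover hN (x := 3*n+2) (d := 3) (by norm_num)
        (Nat.Coprime.mul_right hc32 (Nat.coprime_comm.mp hca)) (by omega) (hdne 3 (by omega))
      have hE : α.num * ((3*N:ℕ):ℤ) - ((3*n+2:ℕ):ℤ) * α.den = (N:ℤ) * (3*(j:ℤ) - 2*m) := by
        rw [hnum, hm, ← haj]; push_cast; ring
      rw [hE, (show (α.den:ℤ) - ((3*N:ℕ):ℤ) = (N:ℤ) * ((m:ℤ) - 3) by rw [hm]; push_cast; ring)]
      apply abs_bound (by positivity)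
      rw [abs_le]
      constructor <;> [omega; omega]
    by_cases hsp2 : 2*j + 2 ≤ m
    · apply hncov
      apply single_cover hN (x := 4*n+1) (d := 4) (by norm_num)
        (Nat.Coprime.mul_right hc41 (Nat.coprime_comm.mp hcb)) (by omega) (hdne 4 (by omega))
      have hE : α.num * ((4*N:ℕ):ℤ) - ((4*n+1:ℕ):ℤ) * α.den = (N:ℤ) * (4*(j:ℤ) - m) := by
        rw [hnum, hm, ← haj]; push_cast; ring
      rw [hE, (show (α.den:ℤ) - ((4*N:ℕ):ℤ) = (N:ℤ) * ((m:ℤ) - 4) by rw [hm]; push_cast; ring)]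
      apply abs_bound (by positivity)
      rw [abs_le]
      constructor <;> [omega; omega]
    by_cases hsp3 : 2*m + 4 ≤ 4*j
    · apply hncov
      apply single_cover hN (x := 4*n+3) (d := 4) (by norm_num)
        (Nat.Coprime.mul_right hc43 (Nat.coprime_comm.mp hcc)) (by omega) (hdne 4 (by omega))
      have hE : α.num * ((4*N:ℕ):ℤ) - ((4*n+3:ℕ):ℤ) * α.den = (N:ℤ) * (4*(j:ℤ) - 3*m) := by
        rw [hnum, hm, ← haj]; push_cast; ring
      rw [hE, (show (α.den:ℤ) - ((4*N:ℕ):ℤ) = (N:ℤ) * ((m:ℤ) - 4) by rw [hm]; push_cast; ring)]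
      apply abs_bound (by positivity)
      rw [abs_le]
      constructor <;> [omega; omega]
    · -- exceptional cases (m,j) = (5,2) or (7,3)
      have h2jm : ¬ (2*j = m) := by
        intro hh
        have hdj : j ∣ m := ⟨2, by omega⟩
        have h2 := Nat.dvd_gcd (dvd_refl j) hdj
        rw [hcopjm] at h2
        have := Nat.le_of_dvd one_pos h2
        omega
      have hmj : (m = 5 ∧ j = 2) ∨ (m = 7 ∧ j = 3) := by omega
      have hαq : α = ((a:ℕ):ℚ)/((N*m:ℕ):ℚ) := by
        rw [← hm]
        conv_lhs => rw [← Rat.num_div_den α]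
        rw [hnum]
        push_cast
        ring
      have hN0 : (0:ℚ) < (N:ℚ) := by exact_mod_cast (by omega : 0 < N)
      rcases hmj with ⟨hm5, hj3⟩ | ⟨hm7, hj4⟩ <;>
        [(rw [hm5] at hm hαq; rw [hm5, hj3] at haj);
         (rw [hm7] at hm hαq; rw [hm7, hj4] at haj)]
      · -- m=5,j=2
        apply hncov
        apply double_cover hN (x1 := 4*n+1) (d1 := 4) (x2 := 3*n+2) (d2 := 3)
          (by norm_num) (by norm_num)
          (Nat.Coprime.mul_right hc41 (Nat.coprime_comm.mp hcb))
          (Nat.Coprime.mul_right hc32 (Nat.coprime_comm.mp hca))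
          (by omega) (by omega) (hdne 4 (by omega)) (hdne 3 (by omega))
        · rw [hαq, (show a = 5*n+2 by omega), div_le_div_iff₀ (by positivity) (by positivity)]
          push_cast
          ring_nf
          linarith [hN0]
        · rw [hαq, (show a = 5*n+2 by omega), div_le_div_iff₀ (by positivity) (by positivity)]
          push_cast
          ring_nf
          linarith [hN0]
        · rw [hm, hαq]
          apply sq_div_ineq (by positivity) (by positivity)
          rw [(show a = 5*n+2 by omega)]
          push_cast
          ring_nf
          nlinarith [hN0, sq_nonneg ((N:ℚ))]
        · rw [hm, hαq]
          apply sq_div_ineq' (by positivity) (by positivity)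
          rw [(show a = 5*n+2 by omega)]
          push_cast
          ring_nf
          nlinarith [hN0, sq_nonneg ((N:ℚ))]
      · -- m=7,j=3
        apply hncov
        apply double_cover hN (x1 := 4*n+1) (d1 := 4) (x2 := 3*n+2) (d2 := 3)
          (by norm_num) (by norm_num)
          (Nat.Coprime.mul_right hc41 (Nat.coprime_comm.mp hcb))
          (Nat.Coprime.mul_right hc32 (Nat.coprime_comm.mp hca))
          (by omega) (by omega) (hdne 4 (by omega)) (hdne 3 (by omega))
        · rw [hαq, (show a = 7*n+3 by omega), div_le_div_iff₀ (by positivity) (by positivity)]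
          push_cast
          ring_nf
          linarith [hN0]
        · rw [hαq, (show a = 7*n+3 by omega), div_le_div_iff₀ (by positivity) (by positivity)]
          push_cast
          ring_nf
          linarith [hN0]
        · rw [hm, hαq]
          apply sq_div_ineq (by positivity) (by positivity)
          rw [(show a = 7*n+3 by omega)]
          push_cast
          ring_nf
          nlinarith [hN0, sq_nonneg ((N:ℚ))]
        · rw [hm, hαq]
          apply sq_div_ineq' (by positivity) (by positivity)
          rw [(show a = 7*n+3 by omega)]
          push_cast
          ring_nf
          nlinarith [hN0, sq_nonneg ((N:ℚ))]


/-- If for every `0 ≤ n ≤ N-1` at least three of `n`, `n+1`, `2n+1`, `3n+1`,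
`3n+2`, `4n+1`, `4n+3` are coprime to `N`, then `c(N) = 0`. -/
theorem cN_eq_zero_of_three_coprime (N : ℕ) (hN : 1 < N)
    (h : ∀ n, n ≤ N - 1 →
      3 ≤ (([n, n + 1, 2 * n + 1, 3 * n + 1, 3 * n + 2, 4 * n + 1, 4 * n + 3].filter
        (fun m => Nat.gcd N m = 1)).length)) :
    cN N = 0 := by
  have key : ∀ α ∈ SSet N, poleComplexity (SSet N) α = 0 := by
    intro α hα
    have hempty : {β ∈ SSet N | β ≠ α ∧ northPole α ∈ disk β} = (∅ : Set ℚ) := by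
      ext β
      simp only [Set.mem_setOf_eq, Set.mem_empty_iff_false, iff_false]
      rintro ⟨hβ, hne, hpole⟩
      obtain ⟨p, hp1, hp4, hpden⟩ := den_classify hN h hα
      obtain ⟨q, hq1, hq4, hqden⟩ := den_classify hN h hβ
      exact no_pole_pair hN hα hβ hp1 hp4 hpden hq1 hq4 hqden hne hpole
    rw [poleComplexity, hempty, Set.ncard_empty]
  have himg : poleComplexity (SSet N) '' SSet N ⊆ {0} := by
    rintro x ⟨α, hα, rfl⟩
    simp [key α hα]
  rcases Set.subset_singleton_iff_eq.mp himg with h0 | h0 <;> rw [cN, h0]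
  · exact csSup_empty
  · exact csSup_singleton 0

end

end Paper
end

section
/- Let (N,n) be a bad pair. Suppose that (a) each of 2n+1, 3n+2, 4n+3, 5n+3 has a common factor greater than 1 with N; and (b) gcd(N, 3n+1) = gcd(N, 5n+4) = 1. Then R_{N,n} = D_{(3n+1)/(3N)} ∪ D_{(5n+4)/(5N)}. In particular, c(N,n) = 0. -/
namespace Paper

noncomputable section

/-- Rationals `a/b ∈ [n/N, (n+1)/N]` in lowest terms with `N ∣ b`. -/
def candB (N n : ℕ) : Set ℚ :=
  {α | (n : ℚ) / (N : ℚ) ≤ α ∧ α ≤ ((n : ℚ) + 1) / (N : ℚ) ∧ N ∣ α.den}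

/-- The region `R_{N,n}` for a bad pair `(N,n)`. -/
def RB (N n : ℕ) : Set ℂ := ⋃ α ∈ candB N n, disk α

/-- The set `S_{N,n}` for a bad pair `(N,n)`. -/
def SB (N n : ℕ) : Set ℚ :=
  {α | α ∈ candB N n ∧ ¬ disk α ⊆ ⋃ β ∈ candB N n \ {α}, disk β}

/-- The complexity `c(N,n)` for a bad pair `(N,n)`. -/
def cB (N n : ℕ) : ℕ := sSup (poleComplexity (SB N n) '' SB N n)

/-! ### Auxiliary lemmas -/

lemma cover_key (M T : ℝ) (ht1 : 1 ≤ T) (htm : T ≤ M - 1)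
    (hcase : 3*T ≤ M ∨ 4*M ≤ 5*T ∨ 7 ≤ 3*M^2 - 9*M*T + 7*T^2) :
    ∀ v : ℝ, |v| ≤ 15 →
      225 + 10*(3*T-M)*v + 25*(3*T-M)^2 ≤ 25*M^2 ∨
      225 - 6*(4*M-5*T)*v + 9*(4*M-5*T)^2 ≤ 9*M^2 := by
  intro v hv
  rw [abs_le] at hv
  obtain ⟨hv1, hv2⟩ := hv
  rcases le_or_gt (3*T) M with hp | hp
  · left
    nlinarith [mul_nonneg (by linarith : (0:ℝ) ≤ M - 3*T) (by linarith : (0:ℝ) ≤ v + 15),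
      mul_nonneg (by linarith : (0:ℝ) ≤ 3*T - 3) (by linarith : (0:ℝ) ≤ 2*M - 3*T + 3)]
  rcases le_or_gt (4*M) (5*T) with hq | hq
  · right
    nlinarith [mul_nonneg (by linarith : (0:ℝ) ≤ 5*T - 4*M) (by linarith : (0:ℝ) ≤ 15 - v),
      mul_nonneg (by linarith : (0:ℝ) ≤ 5*M - 5*T - 5) (by linarith : (0:ℝ) ≤ 5*T - 3*M + 5)]
  have hF : 7 ≤ 3*M^2 - 9*M*T + 7*T^2 := by
    rcases hcase with h | h | h
    · linarith
    · linarith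
    · exact h
  have hM : (0:ℝ) < M := by linarith
  by_cases hv3 : 10*(3*T-M)*v ≤ 25*M^2 - 225 - 25*(3*T-M)^2
  · left; linarith
  · right
    push_neg at hv3
    have hq3 : (0:ℝ) < 3*(4*M-5*T) := by linarith
    have h1 : 3*(4*M-5*T)*(25*M^2 - 225 - 25*(3*T-M)^2) < 3*(4*M-5*T)*(10*(3*T-M)*v) :=
      mul_lt_mul_of_pos_left hv3 hq3
    have h2 : 5*(3*T-M)*(225 + 9*(4*M-5*T)^2 - 9*M^2)
        ≤ 3*(4*M-5*T)*(25*M^2 - 225 - 25*(3*T-M)^2) := by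
      nlinarith [mul_nonneg hM.le (by linarith : (0:ℝ) ≤ 3*M^2 - 9*M*T + 7*T^2 - 7)]
    have hp5 : (0:ℝ) < 5*(3*T-M) := by linarith
    have h3 : 5*(3*T-M)*(225 + 9*(4*M-5*T)^2 - 9*M^2) < 5*(3*T-M)*(6*(4*M-5*T)*v) := by
      calc 5*(3*T-M)*(225 + 9*(4*M-5*T)^2 - 9*M^2)
          ≤ 3*(4*M-5*T)*(25*M^2 - 225 - 25*(3*T-M)^2) := h2
        _ < 3*(4*M-5*T)*(10*(3*T-M)*v) := h1
        _ = 5*(3*T-M)*(6*(4*M-5*T)*v) := by ring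
    have := lt_of_mul_lt_mul_left
      (by linarith [h3] :
        (5*(3*T-M))*(225 + 9*(4*M-5*T)^2 - 9*M^2) < (5*(3*T-M))*(6*(4*M-5*T)*v))
      (le_of_lt hp5)
    linarith

lemma dist_re_im (z : ℂ) (w : ℝ) : dist z (w:ℂ) = Real.sqrt ((z.re - w)^2 + z.im^2) := by
  rw [Complex.dist_eq_re_im]
  simp

lemma mem_ball_real (z : ℂ) (w r : ℝ) (hr : 0 ≤ r) :
    z ∈ Metric.closedBall (w:ℂ) r ↔ (z.re - w)^2 + z.im^2 ≤ r^2 := by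
  rw [Metric.mem_closedBall, dist_re_im]
  constructor
  · intro h
    have h0 : (0:ℝ) ≤ (z.re - w)^2 + z.im^2 := by positivity
    calc (z.re - w)^2 + z.im^2 = (Real.sqrt ((z.re - w)^2 + z.im^2))^2 := (Real.sq_sqrt h0).symm
      _ ≤ r^2 := by apply pow_le_pow_left₀ (Real.sqrt_nonneg _) h
  · intro h
    calc Real.sqrt ((z.re - w)^2 + z.im^2) ≤ Real.sqrt (r^2) := Real.sqrt_le_sqrt h
      _ = r := Real.sqrt_sq hr

lemma cover_disk (X M T nn : ℝ) (hX : 1 ≤ X) (ht1 : 1 ≤ T) (htm : T ≤ M - 1)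
    (hcase : 3*T ≤ M ∨ 4*M ≤ 5*T ∨ 7 ≤ 3*M^2 - 9*M*T + 7*T^2) :
    Metric.closedBall ((((M*nn+T)/(M*X)) : ℝ) : ℂ) (1/(M*X)) ⊆
      Metric.closedBall ((((3*nn+1)/(3*X)) : ℝ) : ℂ) (1/(3*X)) ∪
      Metric.closedBall ((((5*nn+4)/(5*X)) : ℝ) : ℂ) (1/(5*X)) := by
  have hM : (0:ℝ) < M := by linarith
  have hX0 : (0:ℝ) < X := by linarith
  have hMX : (0:ℝ) < M*X := by positivity
  intro z hz
  rw [mem_ball_real _ _ _ (by positivity)] at hz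
  set x : ℝ := z.re - (M*nn+T)/(M*X) with hxdef
  set y : ℝ := z.im with hydef
  have hx2 : x^2 + y^2 ≤ (1/(M*X))^2 := hz
  have hxabs : |x| ≤ 1/(M*X) := by
    have h1 : x^2 ≤ (1/(M*X))^2 := by nlinarith [sq_nonneg y]
    calc |x| = Real.sqrt (x^2) := (Real.sqrt_sq_eq_abs x).symm
      _ ≤ Real.sqrt ((1/(M*X))^2) := Real.sqrt_le_sqrt h1
      _ = 1/(M*X) := Real.sqrt_sq (by positivity)
  have hvabs : |15*M*X*x| ≤ 15 := by
    rw [show (15:ℝ)*M*X*x = (15*(M*X))*x by ring, abs_mul,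
      abs_of_pos (by positivity : (0:ℝ) < 15*(M*X))]
    calc 15*(M*X)*|x| ≤ 15*(M*X)*(1/(M*X)) := by
          apply mul_le_mul_of_nonneg_left hxabs (by positivity)
      _ = 15 := by field_simp
  rcases cover_key M T ht1 htm hcase (15*M*X*x) hvabs with h | h
  · left
    rw [mem_ball_real _ _ _ (by positivity)]
    have hre : z.re - (3*nn+1)/(3*X) = x + (3*T-M)/(3*M*X) := by
      rw [hxdef]; field_simp; ring
    have hs : (0:ℝ) < (15*M*X)^2 := by positivity
    have e1 : (15*M*X)^2 * ((1/(M*X))^2 + 2*((3*T-M)/(3*M*X))*x + ((3*T-M)/(3*M*X))^2)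
        = 225 + 10*(3*T-M)*(15*M*X*x) + 25*(3*T-M)^2 := by field_simp; ring
    have e2 : (15*M*X)^2 * ((1/(3*X))^2) = 25*M^2 := by field_simp; ring
    have key : (1/(M*X))^2 + 2*((3*T-M)/(3*M*X))*x + ((3*T-M)/(3*M*X))^2 ≤ (1/(3*X))^2 := by
      rw [← mul_le_mul_iff_right₀ hs, e1, e2]; exact h
    rw [hre]
    have expand : (x + (3*T-M)/(3*M*X))^2 + y^2
        = (x^2 + y^2) + (2*((3*T-M)/(3*M*X))*x + ((3*T-M)/(3*M*X))^2) := by ring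
    linarith [hx2, key]
  · right
    rw [mem_ball_real _ _ _ (by positivity)]
    have hre : z.re - (5*nn+4)/(5*X) = x - (4*M-5*T)/(5*M*X) := by
      rw [hxdef]; field_simp; ring
    have hs : (0:ℝ) < (15*M*X)^2 := by positivity
    have e1 : (15*M*X)^2 * ((1/(M*X))^2 - 2*((4*M-5*T)/(5*M*X))*x + ((4*M-5*T)/(5*M*X))^2)
        = 225 - 6*(4*M-5*T)*(15*M*X*x) + 9*(4*M-5*T)^2 := by field_simp; ring
    have e2 : (15*M*X)^2 * ((1/(5*X))^2) = 9*M^2 := by field_simp; ring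
    have key : (1/(M*X))^2 - 2*((4*M-5*T)/(5*M*X))*x + ((4*M-5*T)/(5*M*X))^2 ≤ (1/(5*X))^2 := by
      rw [← mul_le_mul_iff_right₀ hs, e1, e2]; exact h
    rw [hre]
    have expand : (x - (4*M-5*T)/(5*M*X))^2 + y^2
        = (x^2 + y^2) + (-(2*((4*M-5*T)/(5*M*X))*x) + ((4*M-5*T)/(5*M*X))^2) := by ring
    linarith [hx2, key]

lemma arith (N n : ℕ) (hN : 1 < N)
    (hg : 1 < Nat.gcd N n) (hbad : 1 < Nat.gcd N (n + 1))
    (h2 : 1 < Nat.gcd N (2 * n + 1)) (h32 : 1 < Nat.gcd N (3 * n + 2))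
    (h43 : 1 < Nat.gcd N (4 * n + 3)) (h53 : 1 < Nat.gcd N (5 * n + 3))
    (m t : ℤ) (hm : 0 < m) (ht0 : 0 ≤ t) (htm : t ≤ m)
    (hcop : Int.gcd (m * (n:ℤ) + t) (m * (N:ℤ)) = 1) :
    1 ≤ t ∧ t ≤ m - 1 ∧
    ((m = 3 ∧ t = 1) ∨ 10 ≤ (3*t - m)^2 + m^2) ∧
    ((m = 5 ∧ t = 4) ∨ 26 ≤ (4*m - 5*t)^2 + m^2) ∧
    (3*t ≤ m ∨ 4*m ≤ 5*t ∨ 7 ≤ 3*m^2 - 9*m*t + 7*t^2) := by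
  have key : ∀ d : ℕ, 1 < d → (d:ℤ) ∣ (m * (n:ℤ) + t) → (d:ℤ) ∣ (m * (N:ℤ)) → False := by
    intro d hd hd1 hd2
    have h := Int.dvd_gcd hd1 hd2
    rw [hcop] at h
    have h1 : (d:ℤ) ∣ (1:ℤ) := by exact_mod_cast h
    have := Int.le_of_dvd one_pos h1
    omega
  have keyH : ∀ (k j : ℕ), 1 < Nat.gcd N (k * n + j) →
      ∀ c : ℤ, 0 ≤ c → m = c * k → t = c * j → False := by
    intro k j hkj c hc hmk htj
    apply key (Nat.gcd N (k * n + j)) hkj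
    · have hdvd : ((Nat.gcd N (k * n + j) : ℤ)) ∣ ((k * n + j : ℕ) : ℤ) :=
        Int.natCast_dvd_natCast.mpr (Nat.gcd_dvd_right _ _)
      have he : m * (n:ℤ) + t = c * ((k * n + j : ℕ) : ℤ) := by
        push_cast; rw [hmk, htj]; ring
      rw [he]
      exact hdvd.mul_left c
    · have hdvd : ((Nat.gcd N (k * n + j) : ℤ)) ∣ ((N : ℕ) : ℤ) :=
        Int.natCast_dvd_natCast.mpr (Nat.gcd_dvd_left _ _)
      exact hdvd.mul_left m
  have ht1 : 1 ≤ t := by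
    by_contra hc
    have ht : t = 0 := by omega
    have hgd : (Nat.gcd N n : ℤ) ∣ m * (n:ℤ) + t := by
      rw [ht, add_zero]
      exact (Int.natCast_dvd_natCast.mpr (Nat.gcd_dvd_right _ _)).mul_left m
    exact key _ hg hgd ((Int.natCast_dvd_natCast.mpr (Nat.gcd_dvd_left _ _)).mul_left m)
  have htm1 : t ≤ m - 1 := by
    by_contra hc
    have ht : t = m := by omega
    have hgd : (Nat.gcd N (n+1) : ℤ) ∣ m * (n:ℤ) + t := by
      have e : m * (n:ℤ) + t = m * ((n:ℤ) + 1) := by rw [ht]; ring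
      rw [e]
      have hdd : ((Nat.gcd N (n+1) : ℤ)) ∣ ((n:ℤ) + 1) := by
        have := Int.natCast_dvd_natCast.mpr (Nat.gcd_dvd_right N (n+1))
        push_cast at this; exact this
      exact hdd.mul_left m
    exact key _ hbad hgd ((Int.natCast_dvd_natCast.mpr (Nat.gcd_dvd_left _ _)).mul_left m)
  have hm2 : 2 ≤ m := by omega
  refine ⟨ht1, htm1, ?_, ?_, ?_⟩
  · by_cases hc : m = 3 ∧ t = 1
    · exact Or.inl hc
    right
    by_contra hlt
    push_neg at hlt
    have hm3 : m ≤ 3 := by nlinarith [sq_nonneg (3*t - m)]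
    interval_cases m
    · have ht : t = 1 := by omega
      exact absurd (keyH 2 1 h2 1 (by norm_num) (by omega) (by omega)) (by simp)
    · have ht : t = 1 ∨ t = 2 := by omega
      rcases ht with h | h
      · exact hc ⟨rfl, h⟩
      · exact absurd (keyH 3 2 h32 1 (by norm_num) (by omega) (by omega)) (by simp)
  · by_cases hc : m = 5 ∧ t = 4
    · exact Or.inl hc
    right
    by_contra hlt
    push_neg at hlt
    have hm5 : m ≤ 5 := by nlinarith [sq_nonneg (4*m - 5*t)]
    interval_cases m <;> interval_cases t
    · exact keyH 2 1 h2 1 (by norm_num) (by omega) (by omega)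
    · norm_num at hlt
    · exact keyH 3 2 h32 1 (by norm_num) (by omega) (by omega)
    · norm_num at hlt
    · norm_num at hlt
    · exact keyH 4 3 h43 1 (by norm_num) (by omega) (by omega)
    · norm_num at hlt
    · norm_num at hlt
    · exact keyH 5 3 h53 1 (by norm_num) (by omega) (by omega)
    · exact hc ⟨rfl, rfl⟩
  · by_contra hcon
    push_neg at hcon
    obtain ⟨hp, hq, hF⟩ := hcon
    have h12 : (6*m - 9*t)^2 + 3*t^2 ≤ 72 := by nlinarith
    have ht4 : t ≤ 4 := by nlinarith [sq_nonneg (6*m - 9*t)]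
    have hm11 : m ≤ 11 := by omega
    interval_cases t <;> interval_cases m <;> first
      | (exact keyH 2 1 h2 1 (by norm_num) (by omega) (by omega))
      | (exact keyH 3 2 h32 1 (by norm_num) (by omega) (by omega))
      | (exact keyH 4 3 h43 1 (by norm_num) (by omega) (by omega))
      | (exact keyH 5 3 h53 1 (by norm_num) (by omega) (by omega))
      | (exact key 2 (by norm_num) (by omega) (by omega))
      | norm_num at hF ⊢
      | omega

lemma pole_out1 (X M T nn : ℝ) (hX : 0 < X) (hM : 0 < M)
    (hgt : 9 < (3*T - M)^2 + M^2) (z : ℂ)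
    (hre : z.re = (3*nn+1)/(3*X)) (him : z.im = 1/(3*X)) :
    z ∉ Metric.closedBall ((((M*nn+T)/(M*X)):ℝ):ℂ) (1/(M*X)) := by
  intro hmem
  rw [mem_ball_real _ _ _ (by positivity)] at hmem
  rw [hre, him] at hmem
  have e : (3*nn+1)/(3*X) - (M*nn+T)/(M*X) = (M-3*T)/(3*M*X) := by field_simp; ring
  rw [e] at hmem
  have hs : (0:ℝ) < (3*M*X)^2 := by positivity
  have e1 : (3*M*X)^2 * (((M-3*T)/(3*M*X))^2 + (1/(3*X))^2) = (M-3*T)^2 + M^2 := by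
    field_simp
  have e2 : (3*M*X)^2 * ((1/(M*X))^2) = 9 := by field_simp; ring
  have hmul := mul_le_mul_of_nonneg_left hmem hs.le
  rw [e1, e2] at hmul
  nlinarith [hmul, hgt]

lemma pole_out2 (X M T nn : ℝ) (hX : 0 < X) (hM : 0 < M)
    (hgt : 26 ≤ (4*M - 5*T)^2 + M^2) (z : ℂ)
    (hre : z.re = (5*nn+4)/(5*X)) (him : z.im = 1/(5*X)) :
    z ∉ Metric.closedBall ((((M*nn+T)/(M*X)):ℝ):ℂ) (1/(M*X)) := by
  intro hmem
  rw [mem_ball_real _ _ _ (by positivity)] at hmem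
  rw [hre, him] at hmem
  have e : (5*nn+4)/(5*X) - (M*nn+T)/(M*X) = (4*M-5*T)/(5*M*X) := by field_simp; ring
  rw [e] at hmem
  have hs : (0:ℝ) < (5*M*X)^2 := by positivity
  have e1 : (5*M*X)^2 * (((4*M-5*T)/(5*M*X))^2 + (1/(5*X))^2) = (4*M-5*T)^2 + M^2 := by
    field_simp
  have e2 : (5*M*X)^2 * ((1/(M*X))^2) = 25 := by field_simp; ring
  have hmul := mul_le_mul_of_nonneg_left hmem hs.le
  rw [e1, e2] at hmul
  nlinarith [hmul, hgt]

lemma northPole_re (q : ℚ) : (northPole q).re = (q:ℝ) := by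
  unfold northPole
  have hd : ((q.den:ℕ):ℂ) = (((q.den:ℝ)):ℂ) := by push_cast; ring
  rw [hd]
  have h2 : Complex.I / (((q.den:ℝ)):ℂ) = Complex.ofReal (1/(q.den:ℝ)) * Complex.I := by
    push_cast; ring
  rw [h2]
  simp

lemma northPole_im (q : ℚ) : (northPole q).im = 1/(q.den:ℝ) := by
  unfold northPole
  have hd : ((q.den:ℕ):ℂ) = (((q.den:ℝ)):ℂ) := by push_cast; ring
  rw [hd]
  have h2 : Complex.I / (((q.den:ℝ)):ℂ) = Complex.ofReal (1/(q.den:ℝ)) * Complex.I := by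
    push_cast; ring
  rw [h2]
  simp

lemma pole_mem (q : ℚ) : northPole q ∈ disk q := by
  rw [disk, Metric.mem_closedBall, northPole]
  have h1 : (q:ℂ) + Complex.I / (q.den:ℂ) - (q:ℂ) = Complex.I / (q.den:ℂ) := by ring
  rw [dist_eq_norm, h1, norm_div]
  simp

lemma cand_extract (N n : ℕ) (hN : 1 < N) (α : ℚ) (hα : α ∈ candB N n) :
    ∃ m t : ℤ, 0 < m ∧ 0 ≤ t ∧ t ≤ m ∧ α.num = m * (n:ℤ) + t ∧ (α.den : ℤ) = m * (N:ℤ) ∧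
      Int.gcd (m * (n:ℤ) + t) (m * (N:ℤ)) = 1 := by
  obtain ⟨h1, h2, k, hk⟩ := hα
  have hN0 : (0:ℚ) < (N:ℚ) := by
    have : 0 < N := by omega
    exact_mod_cast this
  have hden0 : (0:ℚ) < (α.den:ℚ) := by exact_mod_cast α.pos
  have hk0 : 0 < k := by
    rcases Nat.eq_zero_or_pos k with h | h
    · subst h
      rw [Nat.mul_zero] at hk
      have := α.pos
      omega
    · exact h
  have hval : α = (α.num:ℚ)/(α.den:ℚ) := (Rat.num_div_den α).symm
  rw [hval, div_le_div_iff₀ hN0 hden0] at h1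
  rw [hval, div_le_div_iff₀ hden0 hN0] at h2
  have h1z : (n:ℤ) * (α.den:ℤ) ≤ α.num * (N:ℤ) := by exact_mod_cast h1
  have h2z : α.num * (N:ℤ) ≤ ((n:ℤ) + 1) * (α.den:ℤ) := by exact_mod_cast h2
  have hkz : (α.den:ℤ) = (N:ℤ) * (k:ℤ) := by exact_mod_cast hk
  have hNz : (0:ℤ) < (N:ℤ) := by exact_mod_cast Nat.pos_of_ne_zero (by omega)
  refine ⟨(k:ℤ), α.num - (k:ℤ) * (n:ℤ), by exact_mod_cast hk0, ?_, ?_, by ring,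
    by rw [hkz]; ring, ?_⟩
  · -- 0 ≤ t, i.e. k*n ≤ num
    have h1z' : ((k:ℤ) * (n:ℤ)) * (N:ℤ) ≤ α.num * (N:ℤ) := by
      rw [hkz] at h1z; linarith [h1z]
    have := le_of_mul_le_mul_right h1z' hNz
    omega
  · -- t ≤ m, i.e. num ≤ k*n + k
    have h2z' : α.num * (N:ℤ) ≤ ((k:ℤ) * (n:ℤ) + (k:ℤ)) * (N:ℤ) := by
      rw [hkz] at h2z; linarith [h2z]
    have := le_of_mul_le_mul_right h2z' hNz
    omega
  · -- gcd
    have hred : Int.gcd α.num (α.den:ℤ) = 1 := by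
      have := α.reduced
      rw [Int.gcd]
      simpa using this
    have e1 : (k:ℤ) * (n:ℤ) + (α.num - (k:ℤ) * (n:ℤ)) = α.num := by ring
    rw [e1, show (k:ℤ) * (N:ℤ) = (α.den:ℤ) from by rw [hkz]; ring]
    exact hred

lemma disk_eq (N n : ℕ) (β : ℚ) (m t : ℤ) (hnum : β.num = m*(n:ℤ)+t)
    (hden : (β.den:ℤ) = m*(N:ℤ)) :
    disk β = Metric.closedBall
      (((((m:ℝ)*(n:ℝ)+(t:ℝ))/((m:ℝ)*(N:ℝ))):ℝ):ℂ) (1/((m:ℝ)*(N:ℝ))) := by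
  have hde : (β.den:ℝ) = (m:ℝ)*(N:ℝ) := by exact_mod_cast hden
  have hnu : (β.num:ℝ) = (m:ℝ)*(n:ℝ)+(t:ℝ) := by exact_mod_cast hnum
  rw [disk]
  have hce : (β:ℂ) = (((((m:ℝ)*(n:ℝ)+(t:ℝ))/((m:ℝ)*(N:ℝ))):ℝ):ℂ) := by
    rw [Rat.cast_def, Complex.ofReal_div]
    congr 1
    · rw [← hnu]; norm_cast
    · rw [← hde]; norm_cast
  rw [hce, hde]

/-- For a bad pair `(N,n)` such that each of `2n+1`, `3n+2`, `4n+3`, `5n+3` has a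
common factor `> 1` with `N` while `gcd(N,3n+1) = gcd(N,5n+4) = 1`, the region
`R_{N,n}` is the union of the two disks `D_{(3n+1)/(3N)}` and `D_{(5n+4)/(5N)}`.
In particular `c(N,n) = 0`. -/
theorem bad_region_three_five (N n : ℕ) (hN : 1 < N) (hn : n ≤ N - 1)
    (hg : 1 < Nat.gcd N n) (hbad : 1 < Nat.gcd N (n + 1))
    (h2 : 1 < Nat.gcd N (2 * n + 1)) (h32 : 1 < Nat.gcd N (3 * n + 2))
    (h43 : 1 < Nat.gcd N (4 * n + 3)) (h53 : 1 < Nat.gcd N (5 * n + 3))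
    (h31 : Nat.gcd N (3 * n + 1) = 1) (h54 : Nat.gcd N (5 * n + 4) = 1) :
    RB N n = diskAt (3 * n + 1) (3 * N) ∪ diskAt (5 * n + 4) (5 * N) ∧ cB N n = 0 := by
  have hN0 : (0:ℝ) < (N:ℝ) := by exact_mod_cast Nat.pos_of_ne_zero (by omega)
  have hN0Q : (0:ℚ) < (N:ℚ) := by exact_mod_cast Nat.pos_of_ne_zero (by omega)
  have h3cop : Nat.Coprime (3*n+1) (3*N) := by
    apply Nat.Coprime.mul_right
    · exact Nat.coprime_comm.mp ((Nat.Prime.coprime_iff_not_dvd Nat.prime_three).mpr (by omega))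
    · exact Nat.coprime_comm.mp h31
  have h5cop : Nat.Coprime (5*n+4) (5*N) := by
    apply Nat.Coprime.mul_right
    · exact Nat.coprime_comm.mp
        ((Nat.Prime.coprime_iff_not_dvd (by norm_num : Nat.Prime 5)).mpr (by omega))
    · exact Nat.coprime_comm.mp h54
  set α1 : ℚ := ⟨((3*n+1:ℕ):ℤ), 3*N, by omega, by exact h3cop⟩ with hα1def
  set α2 : ℚ := ⟨((5*n+4:ℕ):ℤ), 5*N, by omega, by exact h5cop⟩ with hα2def
  have hα1den : α1.den = 3*N := rfl
  have hα1num : α1.num = ((3*n+1:ℕ):ℤ) := rfl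
  have hα2den : α2.den = 5*N := rfl
  have hα2num : α2.num = ((5*n+4:ℕ):ℤ) := rfl
  have hα1val : α1 = ((3*n+1:ℕ):ℚ)/((3*N:ℕ):ℚ) := by
    calc α1 = (α1.num:ℚ)/(α1.den:ℚ) := (Rat.num_div_den α1).symm
      _ = ((3*n+1:ℕ):ℚ)/((3*N:ℕ):ℚ) := by rw [hα1num, hα1den]; push_cast; ring
  have hα2val : α2 = ((5*n+4:ℕ):ℚ)/((5*N:ℕ):ℚ) := by
    calc α2 = (α2.num:ℚ)/(α2.den:ℚ) := (Rat.num_div_den α2).symm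
      _ = ((5*n+4:ℕ):ℚ)/((5*N:ℕ):ℚ) := by rw [hα2num, hα2den]; push_cast; ring
  have hα1R : (α1:ℝ) = (3*(n:ℝ)+1)/(3*(N:ℝ)) := by rw [hα1val]; push_cast; ring
  have hα2R : (α2:ℝ) = (5*(n:ℝ)+4)/(5*(N:ℝ)) := by rw [hα2val]; push_cast; ring
  have hdisk1 : disk α1
      = Metric.closedBall ((((3*(n:ℝ)+1)/(3*(N:ℝ))):ℝ):ℂ) (1/(3*(N:ℝ))) := by
    have h := disk_eq N n α1 3 1 (by rw [hα1num]; push_cast; ring)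
      (by rw [hα1den]; push_cast; ring)
    rw [h]
    norm_num
  have hdisk2 : disk α2
      = Metric.closedBall ((((5*(n:ℝ)+4)/(5*(N:ℝ))):ℝ):ℂ) (1/(5*(N:ℝ))) := by
    have h := disk_eq N n α2 5 4 (by rw [hα2num]; push_cast; ring)
      (by rw [hα2den]; push_cast; ring)
    rw [h]
    norm_num
  have hdA1 : diskAt (3*n+1) (3*N) = disk α1 := by
    have hc : ((3*n+1:ℕ):ℂ)/((3*N:ℕ):ℂ) = ((((3*(n:ℝ)+1)/(3*(N:ℝ))):ℝ):ℂ) := by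
      push_cast; ring
    have hr : 1/((3*N:ℕ):ℝ) = 1/(3*(N:ℝ)) := by push_cast; ring
    rw [diskAt, hc, hr, hdisk1]
  have hdA2 : diskAt (5*n+4) (5*N) = disk α2 := by
    have hc : ((5*n+4:ℕ):ℂ)/((5*N:ℕ):ℂ) = ((((5*(n:ℝ)+4)/(5*(N:ℝ))):ℝ):ℂ) := by
      push_cast; ring
    have hr : 1/((5*N:ℕ):ℝ) = 1/(5*(N:ℝ)) := by push_cast; ring
    rw [diskAt, hc, hr, hdisk2]
  have hmem1 : α1 ∈ candB N n := by
    refine ⟨?_, ?_, ⟨3, by rw [hα1den]; ring⟩⟩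
    · rw [hα1val, div_le_div_iff₀ hN0Q (by push_cast; positivity)]
      push_cast
      nlinarith [hN0Q]
    · rw [hα1val, div_le_div_iff₀ (by push_cast; positivity) hN0Q]
      push_cast
      nlinarith [hN0Q]
  have hmem2 : α2 ∈ candB N n := by
    refine ⟨?_, ?_, ⟨5, by rw [hα2den]; ring⟩⟩
    · rw [hα2val, div_le_div_iff₀ hN0Q (by push_cast; positivity)]
      push_cast
      nlinarith [hN0Q]
    · rw [hα2val, div_le_div_iff₀ (by push_cast; positivity) hN0Q]
      push_cast
      nlinarith [hN0Q]
  have hsub : ∀ α ∈ candB N n, disk α ⊆ disk α1 ∪ disk α2 := by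
    intro α hα
    obtain ⟨m, t, hm, ht0, htm, hnum, hden, hcop⟩ := cand_extract N n hN α hα
    obtain ⟨ht1, htm1, _, _, hcase⟩ :=
      arith N n hN hg hbad h2 h32 h43 h53 m t hm ht0 htm hcop
    rw [disk_eq N n α m t hnum hden, hdisk1, hdisk2]
    have ht1R : (1:ℝ) ≤ (t:ℝ) := by exact_mod_cast ht1
    have htmR : (t:ℝ) ≤ (m:ℝ) - 1 := by
      have h := htm1
      have h' : ((t:ℤ):ℝ) ≤ ((m - 1 : ℤ):ℝ) := by exact_mod_cast h
      push_cast at h'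
      linarith
    have hcaseR : 3*(t:ℝ) ≤ (m:ℝ) ∨ 4*(m:ℝ) ≤ 5*(t:ℝ) ∨
        7 ≤ 3*(m:ℝ)^2 - 9*(m:ℝ)*(t:ℝ) + 7*(t:ℝ)^2 := by
      rcases hcase with h | h | h
      · left; exact_mod_cast h
      · right; left; exact_mod_cast h
      · right; right; exact_mod_cast h
    exact cover_disk (N:ℝ) (m:ℝ) (t:ℝ) (n:ℝ) (by exact_mod_cast hN.le) ht1R htmR hcaseR
  have hA : RB N n = diskAt (3*n+1) (3*N) ∪ diskAt (5*n+4) (5*N) := by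
    rw [hdA1, hdA2]
    apply Set.Subset.antisymm
    · rw [RB]
      exact Set.iUnion₂_subset hsub
    · exact Set.union_subset (Set.subset_biUnion_of_mem hmem1)
        (Set.subset_biUnion_of_mem hmem2)
  have hα12ne : α1 ≠ α2 := by
    intro h
    have hd := congrArg Rat.den h
    rw [hα1den, hα2den] at hd
    omega
  have hpole1out : ∀ β ∈ candB N n, β ≠ α1 → northPole α1 ∉ disk β := by
    intro β hβ hne
    obtain ⟨m, t, hm, ht0, htm, hnum, hden, hcop⟩ := cand_extract N n hN β hβ
    obtain ⟨ht1, htm1, hC1, _, _⟩ :=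
      arith N n hN hg hbad h2 h32 h43 h53 m t hm ht0 htm hcop
    rcases hC1 with ⟨hm3, ht3⟩ | hgt
    · exfalso
      apply hne
      apply Rat.ext
      · rw [hnum, hα1num, hm3, ht3]; push_cast; ring
      · have hd : (β.den:ℤ) = ((3*N : ℕ):ℤ) := by rw [hden, hm3]; push_cast; ring
        rw [hα1den]
        exact_mod_cast hd
    · rw [disk_eq N n β m t hnum hden]
      apply pole_out1 (N:ℝ) (m:ℝ) (t:ℝ) (n:ℝ) hN0 (by exact_mod_cast hm)
      · have h10 : (10:ℝ) ≤ (3*(t:ℝ) - (m:ℝ))^2 + (m:ℝ)^2 := by exact_mod_cast hgt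
        linarith
      · rw [northPole_re, hα1R]
      · rw [northPole_im, hα1den]; push_cast; ring
  have hpole2out : ∀ β ∈ candB N n, β ≠ α2 → northPole α2 ∉ disk β := by
    intro β hβ hne
    obtain ⟨m, t, hm, ht0, htm, hnum, hden, hcop⟩ := cand_extract N n hN β hβ
    obtain ⟨ht1, htm1, _, hC2, _⟩ :=
      arith N n hN hg hbad h2 h32 h43 h53 m t hm ht0 htm hcop
    rcases hC2 with ⟨hm5, ht5⟩ | hgt
    · exfalso
      apply hne
      apply Rat.ext
      · rw [hnum, hα2num, hm5, ht5]; push_cast; ring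
      · have hd : (β.den:ℤ) = ((5*N : ℕ):ℤ) := by rw [hden, hm5]; push_cast; ring
        rw [hα2den]
        exact_mod_cast hd
    · rw [disk_eq N n β m t hnum hden]
      apply pole_out2 (N:ℝ) (m:ℝ) (t:ℝ) (n:ℝ) hN0 (by exact_mod_cast hm)
      · exact_mod_cast hgt
      · rw [northPole_re, hα2R]
      · rw [northPole_im, hα2den]; push_cast; ring
  have hS : SB N n = {α1, α2} := by
    ext α
    simp only [SB, Set.mem_setOf_eq, Set.mem_insert_iff, Set.mem_singleton_iff]
    constructor
    · rintro ⟨hc, hnot⟩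
      by_contra hne
      push_neg at hne
      obtain ⟨hne1, hne2⟩ := hne
      apply hnot
      refine (hsub α hc).trans (Set.union_subset ?_ ?_)
      · exact Set.subset_biUnion_of_mem
          (show α1 ∈ candB N n \ {α} from ⟨hmem1, by simp [Ne.symm hne1]⟩)
      · exact Set.subset_biUnion_of_mem
          (show α2 ∈ candB N n \ {α} from ⟨hmem2, by simp [Ne.symm hne2]⟩)
    · rintro (rfl | rfl)
      · refine ⟨hmem1, fun hcon => ?_⟩
        have hP := hcon (pole_mem α1)
        rw [Set.mem_iUnion₂] at hP
        obtain ⟨β, ⟨hβc, hβne⟩, hPβ⟩ := hP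
        exact hpole1out β hβc (by simpa using hβne) hPβ
      · refine ⟨hmem2, fun hcon => ?_⟩
        have hP := hcon (pole_mem α2)
        rw [Set.mem_iUnion₂] at hP
        obtain ⟨β, ⟨hβc, hβne⟩, hPβ⟩ := hP
        exact hpole2out β hβc (by simpa using hβne) hPβ
  have hpc1 : poleComplexity ({α1, α2} : Set ℚ) α1 = 0 := by
    have hset : {β ∈ ({α1, α2} : Set ℚ) | β ≠ α1 ∧ northPole α1 ∈ disk β} = ∅ := by
      apply Set.eq_empty_iff_forall_notMem.mpr
      rintro β ⟨hb, hne, hmemP⟩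
      simp only [Set.mem_insert_iff, Set.mem_singleton_iff] at hb
      rcases hb with hb | hb
      · exact hne hb
      · rw [hb] at hmemP
        exact hpole1out α2 hmem2 (Ne.symm hα12ne) hmemP
    unfold poleComplexity
    rw [hset, Set.ncard_empty]
  have hpc2 : poleComplexity ({α1, α2} : Set ℚ) α2 = 0 := by
    have hset : {β ∈ ({α1, α2} : Set ℚ) | β ≠ α2 ∧ northPole α2 ∈ disk β} = ∅ := by
      apply Set.eq_empty_iff_forall_notMem.mpr
      rintro β ⟨hb, hne, hmemP⟩
      simp only [Set.mem_insert_iff, Set.mem_singleton_iff] at hb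
      rcases hb with hb | hb
      · rw [hb] at hmemP
        exact hpole2out α1 hmem1 hα12ne hmemP
      · exact hne hb
    unfold poleComplexity
    rw [hset, Set.ncard_empty]
  have hcB : cB N n = 0 := by
    unfold cB
    rw [hS, Set.image_pair, hpc1, hpc2]
    simp
  exact ⟨hA, hcB⟩

end

end Paper
end

section
/- Let q be a prime, let A = ⌈q²/2⌉, let N>1 and n be integers, and for 1 ≤ j ≤ q−1 define the closed disk D^{(j)} := D( ((Aq+j)n + q)/((Aq+j)N), 1/((Aq+j)N) ) in ℂ. Then: (1) for each 1 ≤ j ≤ q−1 there exists a point z on the boundary circle of D^{(j)} such that z ∉ D^{(l)} for every 1 ≤ l ≤ q−1 with l ≠ j (hence a boundary arc of positive length of D^{(j)} is not covered by the other disks); and (2) the north pole P = ((Aq+q−1)n + q)/((Aq+q−1)N) + i/((Aq+q−1)N) of D^{(q−1)} lies in the open interior of D^{(j)} for every 1 ≤ j ≤ q−2. -/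
namespace Paper

noncomputable section

/-- Center of the disk `D^{(j)}`: the real number `((Aq+j)n + q) / ((Aq+j)N)`,
viewed in `ℂ`. -/
def Dcenter (A q : ℕ) (N n : ℤ) (j : ℕ) : ℂ :=
  (((A * q + j : ℕ) : ℂ) * (n : ℂ) + (q : ℂ)) / (((A * q + j : ℕ) : ℂ) * (N : ℂ))

/-- Radius of the disk `D^{(j)}`: `1 / ((Aq+j)N)`. -/
def Drad (A q : ℕ) (N : ℤ) (j : ℕ) : ℝ :=
  1 / (((A * q + j : ℕ) : ℝ) * (N : ℝ))

/-- The closed disk `D^{(j)}`. -/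
def Dj (A q : ℕ) (N n : ℤ) (j : ℕ) : Set ℂ :=
  Metric.closedBall (Dcenter A q N n j) (Drad A q N j)

end

lemma centerReal (A q : ℕ) (N n : ℤ) (j : ℕ) :
    Dcenter A q N n j =
      (((((A*q+j : ℕ) : ℝ)) * (n:ℝ) + (q:ℝ)) / (((A*q+j : ℕ) : ℝ) * (N:ℝ)) : ℝ) := by
  unfold Dcenter; push_cast; ring

lemma dist_pt (x y c : ℝ) :
    dist ((x:ℂ) + (y:ℂ) * Complex.I) ((c:ℝ) : ℂ) = Real.sqrt ((x - c)^2 + y^2) := by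
  rw [Complex.dist_eq]
  have h : (x:ℂ) + (y:ℂ) * Complex.I - ((c:ℝ):ℂ) = ((x - c : ℝ):ℂ) + ((y:ℝ):ℂ) * Complex.I := by
    push_cast; ring
  rw [h, Complex.norm_add_mul_I]

lemma key1 (a b N q nr : ℝ) (ha : a ≠ 0) (hb : b ≠ 0) (hN : N ≠ 0) (hq : q ≠ 0) :
    ((a*nr+q)/(a*N) - 1/(a*N)*(1/q) - (b*nr+q)/(b*N))^2 + (1/(a*N))^2 * ((q^2-1)/q^2)
      = (1/(b*N))^2 + (b-a)^2*(q^2-1)/(a*b*N)^2 := by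
  field_simp
  ring

lemma key2 (a b N q nr : ℝ) (ha : a ≠ 0) (hb : b ≠ 0) (hN : N ≠ 0) :
    ((b*nr+q)/(b*N) - (a*nr+q)/(a*N))^2 + (1/(b*N))^2
      = (1/(a*N))^2 + (b-a)*(q^2*(b-a) - (a+b))/(a*b*N)^2 := by
  field_simp
  ring

/-- With `A = ⌈q²/2⌉`: (1) each disk `D^{(j)}`, `1 ≤ j ≤ q-1`, has a boundary point
not covered by any other `D^{(l)}`; (2) the north pole of `D^{(q-1)}` lies in the
open interior of `D^{(j)}` for every `1 ≤ j ≤ q-2`. -/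
theorem family_of_disks (q : ℕ) (hq : q.Prime) (A : ℕ) (hA : A = ⌈(q : ℚ) ^ 2 / 2⌉₊)
    (N n : ℤ) (hN : 1 < N) :
    (∀ j, 1 ≤ j → j ≤ q - 1 →
      ∃ z ∈ Metric.sphere (Dcenter A q N n j) (Drad A q N j),
        ∀ l, 1 ≤ l → l ≤ q - 1 → l ≠ j → z ∉ Dj A q N n l) ∧
    (∀ j, 1 ≤ j → j ≤ q - 2 →
      Dcenter A q N n (q - 1) + Complex.I * ((Drad A q N (q - 1) : ℝ) : ℂ) ∈
        Metric.ball (Dcenter A q N n j) (Drad A q N j)) := by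
  have hq2 : 2 ≤ q := hq.two_le
  have hNR : (0:ℝ) < (N:ℝ) := by exact_mod_cast hN.trans_le' (by norm_num)
  have hqR : (2:ℝ) ≤ (q:ℝ) := by exact_mod_cast hq2
  have hqpos : (0:ℝ) < (q:ℝ) := by linarith
  have hq1 : (0:ℝ) < (q:ℝ)^2 - 1 := by nlinarith
  have h2A : (q:ℕ)^2 ≤ 2 * A := by
    have := Nat.le_ceil ((q:ℚ)^2/2)
    rw [← hA] at this
    have h : ((q^2 : ℕ) : ℚ) ≤ ((2*A : ℕ) : ℚ) := by push_cast; linarith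
    exact_mod_cast h
  constructor
  · -- Part 1
    intro j hj1 hj2
    set a : ℝ := ((A*q+j : ℕ) : ℝ) with ha_def
    have hapos : (0:ℝ) < a := by
      have h : 0 < A*q+j := by omega
      rw [ha_def]; exact_mod_cast h
    have ha0 : a ≠ 0 := ne_of_gt hapos
    have hN0 : (N:ℝ) ≠ 0 := ne_of_gt hNR
    have hq0 : (q:ℝ) ≠ 0 := ne_of_gt hqpos
    have hrj : (0:ℝ) < 1/(a*(N:ℝ)) := by positivity
    set cj : ℝ := (a*(n:ℝ)+(q:ℝ))/(a*(N:ℝ)) with hcj_def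
    set x0 : ℝ := cj - 1/(a*(N:ℝ))*(1/(q:ℝ)) with hx0_def
    set y0 : ℝ := 1/(a*(N:ℝ)) * (Real.sqrt ((q:ℝ)^2-1)/(q:ℝ)) with hy0_def
    have hy0sq : y0^2 = (1/(a*(N:ℝ)))^2 * (((q:ℝ)^2-1)/(q:ℝ)^2) := by
      rw [hy0_def, mul_pow]
      congr 1
      rw [div_pow, Real.sq_sqrt (le_of_lt hq1)]
    refine ⟨(x0:ℂ) + (y0:ℂ) * Complex.I, ?_, ?_⟩
    · rw [Metric.mem_sphere, centerReal, dist_pt]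
      have hss : (x0 - cj)^2 + y0^2 = (1/(a*(N:ℝ)))^2 := by
        rw [hx0_def, hy0sq]
        field_simp
        ring
      have : ((((A*q+j : ℕ) : ℝ)) * (n:ℝ) + (q:ℝ)) / (((A*q+j : ℕ) : ℝ) * (N:ℝ)) = cj := rfl
      rw [this, hss, Real.sqrt_sq (le_of_lt hrj)]
      rfl
    · intro l hl1 hl2 hlj
      set b : ℝ := ((A*q+l : ℕ) : ℝ) with hb_def
      have hbpos : (0:ℝ) < b := by
        have h : 0 < A*q+l := by omega
        rw [hb_def]; exact_mod_cast h
      have hb0 : b ≠ 0 := ne_of_gt hbpos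
      have hba : b - a ≠ 0 := by
        rw [ha_def, hb_def]
        have : ((A*q+l : ℕ) : ℝ) - ((A*q+j : ℕ) : ℝ) = (l:ℝ) - (j:ℝ) := by push_cast; ring
        rw [this]
        exact sub_ne_zero.mpr (by exact_mod_cast hlj)
      rw [Dj, Metric.mem_closedBall, not_le, centerReal, dist_pt]
      have hrl : (0:ℝ) ≤ 1/(b*(N:ℝ)) := by positivity
      have hkey : (x0 - (b*(n:ℝ)+(q:ℝ))/(b*(N:ℝ)))^2 + y0^2
          = (1/(b*(N:ℝ)))^2 + (b-a)^2*((q:ℝ)^2-1)/(a*b*(N:ℝ))^2 := by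
        rw [hx0_def, hcj_def, hy0sq]
        exact key1 a b (N:ℝ) (q:ℝ) (n:ℝ) ha0 hb0 hN0 hq0
      have hpos : 0 < (b-a)^2*((q:ℝ)^2-1)/(a*b*(N:ℝ))^2 := by positivity
      have hlt : (1/(b*(N:ℝ)))^2 < (x0 - (b*(n:ℝ)+(q:ℝ))/(b*(N:ℝ)))^2 + y0^2 := by
        rw [hkey]; linarith
      have : Drad A q N l = 1/(b*(N:ℝ)) := rfl
      rw [this]
      exact (Real.lt_sqrt hrl).mpr hlt
  · -- Part 2
    intro j hj1 hj2
    have hq3 : 3 ≤ q := by omega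
    set a : ℝ := ((A*q+j : ℕ) : ℝ) with ha_def
    set b : ℝ := ((A*q+(q-1) : ℕ) : ℝ) with hb_def
    have hapos : (0:ℝ) < a := by
      have h : 0 < A*q+j := by omega
      rw [ha_def]; exact_mod_cast h
    have hbpos : (0:ℝ) < b := by
      have h : 0 < A*q+(q-1) := by omega
      rw [hb_def]; exact_mod_cast h
    have ha0 : a ≠ 0 := ne_of_gt hapos
    have hb0 : b ≠ 0 := ne_of_gt hbpos
    have hN0 : (N:ℝ) ≠ 0 := ne_of_gt hNR
    have hrj : (0:ℝ) < 1/(a*(N:ℝ)) := by positivity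
    have hba : b - a = ((q-1-j : ℕ) : ℝ) := by
      rw [ha_def, hb_def]
      have h1 : A*q+(q-1) = (A*q+j) + (q-1-j) := by omega
      rw [h1]
      push_cast
      ring
    have hbapos : (0:ℝ) < b - a := by
      rw [hba]
      have h : 0 < q - 1 - j := by omega
      exact_mod_cast h
    -- the crucial size inequality
    have hsize : (q:ℝ)^2 * (b - a) - (a + b) < 0 := by
      have hd : b - a ≤ (q:ℝ) - 2 := by
        rw [hba]
        have : q - 1 - j ≤ q - 2 := by omega
        calc ((q-1-j : ℕ) : ℝ) ≤ ((q - 2 : ℕ) : ℝ) := by exact_mod_cast this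
          _ = (q:ℝ) - 2 := by
            have : ((q - 2 : ℕ) : ℝ) = (q:ℝ) - 2 := by
              have h2 : (2:ℕ) ≤ q := hq2
              push_cast [Nat.cast_sub h2]
              ring
            rw [this]
      have h2AR : (q:ℝ)^2 ≤ 2 * (A:ℝ) := by exact_mod_cast h2A
      have haA : (A:ℝ) * q ≤ a := by
        rw [ha_def]; push_cast; linarith [Nat.cast_nonneg (α := ℝ) j]
      have hbA : (A:ℝ) * q ≤ b := by
        rw [hb_def]; push_cast; linarith [Nat.cast_nonneg (α := ℝ) (q-1)]
      nlinarith [mul_le_mul_of_nonneg_left hd (sq_nonneg (q:ℝ)),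
        mul_le_mul_of_nonneg_right h2AR (le_of_lt hqpos)]
    have hP : Dcenter A q N n (q-1) + Complex.I * ((Drad A q N (q-1) : ℝ) : ℂ)
        = (((b*(n:ℝ)+(q:ℝ))/(b*(N:ℝ)) : ℝ) : ℂ) + ((1/(b*(N:ℝ)) : ℝ) : ℂ) * Complex.I := by
      rw [centerReal]
      have : Drad A q N (q-1) = 1/(b*(N:ℝ)) := rfl
      rw [this]
      ring
    rw [hP, Metric.mem_ball, centerReal, dist_pt]
    have hkey : ((b*(n:ℝ)+(q:ℝ))/(b*(N:ℝ)) - (a*(n:ℝ)+(q:ℝ))/(a*(N:ℝ)))^2 + (1/(b*(N:ℝ)))^2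
        = (1/(a*(N:ℝ)))^2 + (b-a)*((q:ℝ)^2*(b-a) - (a+b))/(a*b*(N:ℝ))^2 :=
      key2 a b (N:ℝ) (q:ℝ) (n:ℝ) ha0 hb0 hN0
    have hneg : (b-a)*((q:ℝ)^2*(b-a) - (a+b))/(a*b*(N:ℝ))^2 < 0 := by
      apply div_neg_of_neg_of_pos
      · exact mul_neg_of_pos_of_neg hbapos hsize
      · positivity
    have hlt : ((b*(n:ℝ)+(q:ℝ))/(b*(N:ℝ)) - (a*(n:ℝ)+(q:ℝ))/(a*(N:ℝ)))^2 + (1/(b*(N:ℝ)))^2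
        < (1/(a*(N:ℝ)))^2 := by rw [hkey]; linarith
    have : Drad A q N j = 1/(a*(N:ℝ)) := rfl
    rw [this]
    exact (Real.sqrt_lt' hrj).mpr hlt


end Paper
end
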